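/- For integers d ≥ 2 and k ≥ 2, the minimum eigenvalue of A_k satisfies λ_min(A_k) ≤ -(2√(d-1)/d)·(cos(π/(k+1)) + (√(d/(d-1)) - 1)·(2/(k+1))·sin(π/(k+1))·sin(2π/(k+1))). -/

import Mathlib

open Real Matrix

section AuxLemmas

open Finset

private noncomputable def tv (θ : ℝ) (n : ℕ) : ℝ := (-1)^n * Real.sin ((n+1)*θ)

private lemma rayleigh_min {n : ℕ} [Nonempty (Fin n)] (A : Matrix (Fin n) (Fin n) ℝ)
    (hA : A.IsHermitian) (x : Fin n → ℝ) :
    (⨅ i, hA.eigenvalues i) * (x ⬝ᵥ x) ≤ x ⬝ᵥ (A *ᵥ x) := by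
  classical
  set U : Matrix (Fin n) (Fin n) ℝ := (hA.eigenvectorUnitary : Matrix (Fin n) (Fin n) ℝ) with hU
  set y : Fin n → ℝ := star U *ᵥ x with hy
  have hvm : x ᵥ* U = y := by
    funext j
    simp [hy, vecMul, mulVec, dotProduct, Matrix.star_apply, mul_comm]
  have hUU : U * star U = 1 := (Matrix.mem_unitaryGroup_iff).mp hA.eigenvectorUnitary.2
  have h1 : x ⬝ᵥ (A *ᵥ x) = ∑ i, hA.eigenvalues i * y i ^ 2 := by
    conv_lhs => rw [hA.spectral_theorem, Unitary.conjStarAlgAut_apply]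
    rw [← Matrix.mulVec_mulVec, ← Matrix.mulVec_mulVec, dotProduct_mulVec, hvm, ← hy]
    simp only [dotProduct, Matrix.mulVec_diagonal, Function.comp_apply, RCLike.ofReal_real_eq_id,
      id_eq]
    exact Finset.sum_congr rfl fun i _ => by ring
  have h2 : x ⬝ᵥ x = ∑ i, y i ^ 2 := by
    conv_lhs => rw [show x ⬝ᵥ x = x ⬝ᵥ ((U * star U) *ᵥ x) by rw [hUU, Matrix.one_mulVec]]
    rw [← Matrix.mulVec_mulVec, dotProduct_mulVec, hvm, ← hy]
    simp only [dotProduct]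
    exact Finset.sum_congr rfl fun i _ => by ring
  rw [h1, h2, Finset.mul_sum]
  apply Finset.sum_le_sum
  intro i _
  have h3 : (⨅ j, hA.eigenvalues j) ≤ hA.eigenvalues i :=
    ciInf_le (Finite.bddBelow_range _) i
  nlinarith [sq_nonneg (y i)]

private lemma sin_theta_pos {k : ℕ} (hk : 1 ≤ k) : 0 < Real.sin (π / (k + 1)) := by
  apply Real.sin_pos_of_pos_of_lt_pi
  · positivity
  · rw [div_lt_iff₀ (by positivity)]
    have : (1:ℝ) ≤ k := Nat.one_le_cast.mpr hk
    nlinarith [Real.pi_pos]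

private lemma sum_cos_A {k : ℕ} (hk : 1 ≤ k) :
    ∑ j ∈ Finset.range k, Real.cos ((2 * (j : ℝ) + 3) * (π / (k + 1))) =
      -Real.cos (π / (k + 1)) := by
  set θ := π / (k + 1) with hθ
  have hs := sin_theta_pos hk
  have key : ∑ j ∈ Finset.range k,
      (Real.sin ((2 * ((j : ℝ) + 1) + 2) * θ) - Real.sin ((2 * (j : ℝ) + 2) * θ))
      = Real.sin ((2 * (k : ℝ) + 2) * θ) - Real.sin (2 * θ) := by
    have := Finset.sum_range_sub (fun j : ℕ => Real.sin ((2 * (j : ℝ) + 2) * θ)) k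
    simpa using this
  have hterm : ∀ j : ℕ, Real.sin ((2 * ((j : ℝ) + 1) + 2) * θ) - Real.sin ((2 * (j : ℝ) + 2) * θ)
      = 2 * Real.sin θ * Real.cos ((2 * (j : ℝ) + 3) * θ) := by
    intro j
    rw [Real.sin_sub_sin]
    ring_nf
  have hend : Real.sin ((2 * (k : ℝ) + 2) * θ) = 0 := by
    have : (2 * (k : ℝ) + 2) * θ = 2 * π := by
      rw [hθ]; field_simp
    rw [this]
    simp [Real.sin_two_pi]
  rw [Finset.sum_congr rfl fun j _ => hterm j] at key
  rw [hend, Real.sin_two_mul, ← Finset.mul_sum] at key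
  nlinarith [key, hs]

private lemma sum_cos_B {k : ℕ} (hk : 1 ≤ k) :
    ∑ j ∈ Finset.range k, Real.cos ((2 * (j : ℝ) + 2) * (π / (k + 1))) = -1 := by
  set θ := π / (k + 1) with hθ
  have hs := sin_theta_pos hk
  have key : ∑ j ∈ Finset.range k,
      (Real.sin ((2 * ((j : ℝ) + 1) + 1) * θ) - Real.sin ((2 * (j : ℝ) + 1) * θ))
      = Real.sin ((2 * (k : ℝ) + 1) * θ) - Real.sin (1 * θ) := by
    have := Finset.sum_range_sub (fun j : ℕ => Real.sin ((2 * (j : ℝ) + 1) * θ)) k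
    simpa using this
  have hterm : ∀ j : ℕ, Real.sin ((2 * ((j : ℝ) + 1) + 1) * θ) - Real.sin ((2 * (j : ℝ) + 1) * θ)
      = 2 * Real.sin θ * Real.cos ((2 * (j : ℝ) + 2) * θ) := by
    intro j
    rw [Real.sin_sub_sin]
    ring_nf
  have hend : Real.sin ((2 * (k : ℝ) + 1) * θ) = -Real.sin θ := by
    have : (2 * (k : ℝ) + 1) * θ = 2 * π - θ := by
      rw [hθ]; field_simp; ring
    rw [this, Real.sin_sub, Real.sin_two_pi, Real.cos_two_pi]
    ring
  rw [Finset.sum_congr rfl fun j _ => hterm j] at key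
  rw [hend, ← Finset.mul_sum, one_mul] at key
  nlinarith [key, hs]

private lemma sum_cos_C {k : ℕ} (hk : 1 ≤ k) :
    ∑ j ∈ Finset.range k, Real.cos ((2 * (j : ℝ) + 1) * (π / (k + 1))) =
      -Real.cos (π / (k + 1)) := by
  set θ := π / (k + 1) with hθ
  have hs := sin_theta_pos hk
  have key : ∑ j ∈ Finset.range k,
      (Real.sin ((2 * ((j : ℝ) + 1)) * θ) - Real.sin ((2 * (j : ℝ)) * θ))
      = Real.sin ((2 * (k : ℝ)) * θ) - Real.sin ((2 * (0 : ℝ)) * θ) := by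
    have := Finset.sum_range_sub (fun j : ℕ => Real.sin ((2 * (j : ℝ)) * θ)) k
    simpa using this
  have hterm : ∀ j : ℕ, Real.sin ((2 * ((j : ℝ) + 1)) * θ) - Real.sin ((2 * (j : ℝ)) * θ)
      = 2 * Real.sin θ * Real.cos ((2 * (j : ℝ) + 1) * θ) := by
    intro j
    rw [Real.sin_sub_sin]
    ring_nf
  have hend : Real.sin ((2 * (k : ℝ)) * θ) = -Real.sin (2 * θ) := by
    have : (2 * (k : ℝ)) * θ = 2 * π - 2 * θ := by
      rw [hθ]; field_simp; ring
    rw [this, Real.sin_sub]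
    simp [Real.sin_two_pi, Real.cos_two_pi]
  rw [Finset.sum_congr rfl fun j _ => hterm j] at key
  rw [hend, ← Finset.mul_sum] at key
  simp only [mul_zero, zero_mul, Real.sin_zero, sub_zero] at key
  rw [Real.sin_two_mul] at key
  nlinarith [key, hs]

private lemma sum_sin_sq {k : ℕ} (hk : 1 ≤ k) :
    ∑ j ∈ Finset.range k, Real.sin (((j : ℝ) + 1) * (π / (k + 1))) ^ 2 = ((k : ℝ) + 1) / 2 := by
  set θ := π / (k + 1) with hθ
  have hterm : ∀ j : ℕ, Real.sin (((j : ℝ) + 1) * θ) ^ 2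
      = 1 / 2 - Real.cos ((2 * (j : ℝ) + 2) * θ) / 2 := by
    intro j
    rw [Real.sin_sq_eq_half_sub]
    ring_nf
  rw [Finset.sum_congr rfl fun j _ => hterm j, Finset.sum_sub_distrib,
    Finset.sum_const, ← Finset.sum_div, sum_cos_B hk]
  simp
  ring

private lemma sum_sin_mul {k : ℕ} (hk : 1 ≤ k) :
    ∑ j ∈ Finset.range k,
      Real.sin (((j : ℝ) + 1) * (π / (k + 1))) * Real.sin (((j : ℝ) + 2) * (π / (k + 1)))
      = ((k : ℝ) + 1) * Real.cos (π / (k + 1)) / 2 := by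
  set θ := π / (k + 1) with hθ
  have hterm : ∀ j : ℕ, Real.sin (((j : ℝ) + 1) * θ) * Real.sin (((j : ℝ) + 2) * θ)
      = Real.cos θ / 2 - Real.cos ((2 * (j : ℝ) + 3) * θ) / 2 := by
    intro j
    have := Real.cos_sub_cos θ ((2 * (j : ℝ) + 3) * θ)
    have h1 : (θ + (2 * (j : ℝ) + 3) * θ) / 2 = ((j : ℝ) + 2) * θ := by ring
    have h2 : (θ - (2 * (j : ℝ) + 3) * θ) / 2 = -(((j : ℝ) + 1) * θ) := by ring
    rw [h1, h2, Real.sin_neg] at this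
    nlinarith [this]
  rw [Finset.sum_congr rfl fun j _ => hterm j, Finset.sum_sub_distrib,
    Finset.sum_const, ← Finset.sum_div, sum_cos_A hk]
  simp
  ring

private lemma sum_sin_mul' {k : ℕ} (hk : 1 ≤ k) :
    ∑ j ∈ Finset.range k,
      Real.sin ((j : ℝ) * (π / (k + 1))) * Real.sin (((j : ℝ) + 1) * (π / (k + 1)))
      = ((k : ℝ) + 1) * Real.cos (π / (k + 1)) / 2 := by
  set θ := π / (k + 1) with hθ
  have hterm : ∀ j : ℕ, Real.sin ((j : ℝ) * θ) * Real.sin (((j : ℝ) + 1) * θ)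
      = Real.cos θ / 2 - Real.cos ((2 * (j : ℝ) + 1) * θ) / 2 := by
    intro j
    have := Real.cos_sub_cos θ ((2 * (j : ℝ) + 1) * θ)
    have h1 : (θ + (2 * (j : ℝ) + 1) * θ) / 2 = ((j : ℝ) + 1) * θ := by ring
    have h2 : (θ - (2 * (j : ℝ) + 1) * θ) / 2 = -((j : ℝ) * θ) := by ring
    rw [h1, h2, Real.sin_neg] at this
    nlinarith [this]
  rw [Finset.sum_congr rfl fun j _ => hterm j, Finset.sum_sub_distrib,
    Finset.sum_const, ← Finset.sum_div, sum_cos_C hk]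
  simp
  ring

private lemma mulVec_tv {k d : ℕ} (hk : 2 ≤ k) (hd : 2 ≤ d)
    (A : Matrix (Fin k) (Fin k) ℝ)
    (hA : A = Matrix.of fun i j : Fin k =>
      if (i : ℕ) + 1 = j ∨ (j : ℕ) + 1 = i then
        (if (i : ℕ) + (j : ℕ) = 1 then 1 / Real.sqrt d else Real.sqrt (d - 1) / d)
      else 0) (i : Fin k) :
    (A *ᵥ fun j : Fin k => tv (π / (k + 1)) (j : ℕ)) i
      = (if (i : ℕ) = 0 then 1 / Real.sqrt d else Real.sqrt (d - 1) / d) *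
          ((-1) ^ ((i : ℕ) + 1) * Real.sin (((i : ℕ) + 2) * (π / (k + 1))))
        + (if (i : ℕ) = 1 then 1 / Real.sqrt d else Real.sqrt (d - 1) / d) *
          ((-1) ^ ((i : ℕ) + 1) * Real.sin ((i : ℕ) * (π / (k + 1)))) := by
  classical
  set θ := π / (k + 1) with hθ
  set c : ℝ := 1 / Real.sqrt d with hc
  set b : ℝ := Real.sqrt (d - 1) / d with hb
  have hsin0 : Real.sin (((k : ℝ) + 1) * θ) = 0 := by
    have : ((k : ℝ) + 1) * θ = π := by
      rw [hθ]; field_simp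
    rw [this, Real.sin_pi]
  have hmv : (A *ᵥ fun j : Fin k => tv θ (j : ℕ)) i
      = ∑ jn ∈ Finset.range k,
          (if (i : ℕ) + 1 = jn ∨ jn + 1 = (i : ℕ) then
            (if (i : ℕ) + jn = 1 then c else b) else 0) * tv θ jn := by
    rw [← Fin.sum_univ_eq_sum_range
      (fun jn => (if (i : ℕ) + 1 = jn ∨ jn + 1 = (i : ℕ) then
            (if (i : ℕ) + jn = 1 then c else b) else 0) * tv θ jn) k]
    simp [Matrix.mulVec, dotProduct, hA]
  rw [hmv]
  rcases Nat.eq_zero_or_eq_succ_pred (i : ℕ) with h0 | hsucc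
  · -- i = 0
    rw [h0]
    have hstep : ∀ jn ∈ Finset.range k,
        (if (0 : ℕ) + 1 = jn ∨ jn + 1 = 0 then (if 0 + jn = 1 then c else b) else 0) * tv θ jn
        = if jn = 1 then c * tv θ jn else 0 := by
      intro jn _
      rcases eq_or_ne jn 1 with rfl | hne
      · norm_num
      · have h1 : ¬((0:ℕ) + 1 = jn ∨ jn + 1 = 0) := by omega
        rw [if_neg h1, zero_mul, if_neg hne]
    rw [Finset.sum_congr rfl hstep, Finset.sum_ite_eq' (Finset.range k) 1 (fun jn => c * tv θ jn)]
    have h1m : (1 : ℕ) ∈ Finset.range k := Finset.mem_range.mpr (by omega)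
    rw [if_pos h1m, if_pos rfl, if_neg (by omega : ¬(0 : ℕ) = 1)]
    simp only [tv]
    push_cast
    norm_num
  · -- i = m + 1
    set m := (i : ℕ) - 1 with hm
    have him : (i : ℕ) = m + 1 := hsucc
    have himk : m + 1 < k := him ▸ i.isLt
    rw [him]
    have hstep : ∀ jn ∈ Finset.range k,
        (if m + 1 + 1 = jn ∨ jn + 1 = m + 1 then (if m + 1 + jn = 1 then c else b) else 0) * tv θ jn
        = (if jn = m + 2 then b * tv θ jn else 0)
          + (if jn = m then (if m = 0 then c else b) * tv θ jn else 0) := by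
      intro jn _
      rcases eq_or_ne jn (m + 2) with rfl | hne2
      · rw [if_pos (by omega : m + 1 + 1 = m + 2 ∨ m + 2 + 1 = m + 1),
          if_neg (by omega : ¬(m + 1 + (m + 2) = 1)), if_pos rfl,
          if_neg (by omega : ¬(m + 2 = m)), add_zero]
      · rcases eq_or_ne jn m with rfl | hnem
        · rw [if_pos (by omega : m + 1 + 1 = m ∨ m + 1 = m + 1),
            if_congr (by omega : m + 1 + m = 1 ↔ m = 0) rfl rfl,
            if_neg hne2, if_pos rfl, zero_add]
        · have h1 : ¬(m + 1 + 1 = jn ∨ jn + 1 = m + 1) := by omega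
          rw [if_neg h1, zero_mul, if_neg hne2, if_neg hnem, add_zero]
    rw [Finset.sum_congr rfl hstep, Finset.sum_add_distrib,
      Finset.sum_ite_eq' (Finset.range k) (m + 2) (fun jn => b * tv θ jn),
      Finset.sum_ite_eq' (Finset.range k) m (fun jn => (if m = 0 then c else b) * tv θ jn)]
    have hmmem : m ∈ Finset.range k := Finset.mem_range.mpr (by omega)
    rw [if_pos hmmem]
    have hfirst : (if m + 2 ∈ Finset.range k then b * tv θ (m + 2) else 0) = b * tv θ (m + 2) := by
      by_cases hmem : m + 2 ∈ Finset.range k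
      · rw [if_pos hmem]
      · have hk2 : m + 2 = k := by
          simp only [Finset.mem_range] at hmem; omega
        rw [if_neg hmem]
        have htv0 : tv θ (m + 2) = 0 := by
          rw [tv, hk2]
          push_cast
          rw [hsin0]
          ring
        rw [htv0, mul_zero]
    rw [hfirst]
    rw [if_neg (by omega : ¬(m + 1 = 0)),
      if_congr (by omega : m + 1 = 1 ↔ m = 0) rfl rfl]
    have ha : tv θ (m + 2) = (-1) ^ (m + 1 + 1) * Real.sin ((↑(m + 1) + 2) * θ) := by
      rw [tv]
      push_cast
      rw [show ((-1:ℝ)) ^ (m + 2) = (-1) ^ (m + 1 + 1) by norm_num]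
      ring_nf
    have hb2 : tv θ m = (-1) ^ (m + 1 + 1) * Real.sin ((↑(m + 1) : ℝ) * θ) := by
      rw [tv]
      rw [show ((-1:ℝ)) ^ (m + 1 + 1) = (-1) ^ m by rw [pow_succ, pow_succ]; ring]
      push_cast
      ring_nf
    rw [ha, hb2]

private lemma norm_tv {k : ℕ} (hk : 2 ≤ k) :
    (fun j : Fin k => tv (π / (k + 1)) (j : ℕ)) ⬝ᵥ (fun j : Fin k => tv (π / (k + 1)) (j : ℕ))
      = ((k : ℝ) + 1) / 2 := by
  set θ := π / (k + 1) with hθ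
  rw [dotProduct]
  have h1 : ∑ i : Fin k, tv θ (i : ℕ) * tv θ (i : ℕ)
      = ∑ n ∈ Finset.range k, Real.sin (((n : ℝ) + 1) * θ) ^ 2 := by
    rw [← Fin.sum_univ_eq_sum_range (fun n => Real.sin (((n : ℝ) + 1) * θ) ^ 2) k]
    refine Finset.sum_congr rfl fun i _ => ?_
    rw [tv]
    have h : ((-1:ℝ))^(i:ℕ) * (-1)^(i:ℕ) = 1 := by
      rw [← pow_add]; exact Even.neg_one_pow ⟨i, rfl⟩
    linear_combination Real.sin (((i:ℕ) + 1) * θ) ^ 2 * h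
  rw [h1, sum_sin_sq (by omega)]

private lemma quad_tv {k d : ℕ} (hk : 2 ≤ k) (hd : 2 ≤ d)
    (A : Matrix (Fin k) (Fin k) ℝ)
    (hA : A = Matrix.of fun i j : Fin k =>
      if (i : ℕ) + 1 = j ∨ (j : ℕ) + 1 = i then
        (if (i : ℕ) + (j : ℕ) = 1 then 1 / Real.sqrt d else Real.sqrt (d - 1) / d)
      else 0) :
    (fun j : Fin k => tv (π / (k + 1)) (j : ℕ)) ⬝ᵥ (A *ᵥ fun j : Fin k => tv (π / (k + 1)) (j : ℕ))
      = -(Real.sqrt (d - 1) / d * (((k : ℝ) + 1) * Real.cos (π / (k + 1))))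
        - 2 * (1 / Real.sqrt d - Real.sqrt (d - 1) / d) *
            (Real.sin (π / (k + 1)) * Real.sin (2 * (π / (k + 1)))) := by
  classical
  have S1 := sum_sin_mul (show 1 ≤ k by omega)
  have S2 := sum_sin_mul' (show 1 ≤ k by omega)
  set θ := π / (k + 1) with hθ
  set c : ℝ := 1 / Real.sqrt d with hc
  set b : ℝ := Real.sqrt (d - 1) / d with hb
  rw [dotProduct]
  rw [Finset.sum_congr rfl fun i _ => by rw [mulVec_tv hk hd A hA i]]
  rw [← Fin.sum_univ_eq_sum_range (fun n =>
      tv θ n * ((if n = 0 then c else b) * ((-1) ^ (n + 1) * Real.sin (((n : ℝ) + 2) * θ))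
        + (if n = 1 then c else b) * ((-1) ^ (n + 1) * Real.sin ((n : ℝ) * θ)))) k |>.symm]
  have hG : ∀ n ∈ Finset.range k,
      tv θ n * ((if n = 0 then c else b) * ((-1) ^ (n + 1) * Real.sin (((n : ℝ) + 2) * θ))
        + (if n = 1 then c else b) * ((-1) ^ (n + 1) * Real.sin ((n : ℝ) * θ)))
      = (-b) * (Real.sin (((n : ℝ) + 1) * θ) * Real.sin (((n : ℝ) + 2) * θ))
        + (-b) * (Real.sin ((n : ℝ) * θ) * Real.sin (((n : ℝ) + 1) * θ))
        + (if n = 0 then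
            -((c - b) * (Real.sin (((n : ℝ) + 1) * θ) * Real.sin (((n : ℝ) + 2) * θ))) else 0)
        + (if n = 1 then
            -((c - b) * (Real.sin ((n : ℝ) * θ) * Real.sin (((n : ℝ) + 1) * θ))) else 0) := by
    intro n _
    have hodd : ((-1:ℝ))^n * (-1)^(n+1) = -1 := by
      rw [← pow_add]; exact Odd.neg_one_pow ⟨n, by omega⟩
    have e1 : (if n = 0 then
          -((c - b) * (Real.sin (((n : ℝ) + 1) * θ) * Real.sin (((n : ℝ) + 2) * θ))) else 0)
        = -(((if n = 0 then c else b) - b) *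
            (Real.sin (((n : ℝ) + 1) * θ) * Real.sin (((n : ℝ) + 2) * θ))) := by
      split_ifs <;> ring
    have e2 : (if n = 1 then
          -((c - b) * (Real.sin ((n : ℝ) * θ) * Real.sin (((n : ℝ) + 1) * θ))) else 0)
        = -(((if n = 1 then c else b) - b) *
            (Real.sin ((n : ℝ) * θ) * Real.sin (((n : ℝ) + 1) * θ))) := by
      split_ifs <;> ring
    rw [e1, e2, tv]
    push_cast
    linear_combination (Real.sin (((n : ℝ) + 1) * θ) *
      ((if n = 0 then c else b) * Real.sin (((n : ℝ) + 2) * θ)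
        + (if n = 1 then c else b) * Real.sin ((n : ℝ) * θ))) * hodd
  rw [Finset.sum_congr rfl hG]
  rw [Finset.sum_add_distrib, Finset.sum_add_distrib, Finset.sum_add_distrib,
    ← Finset.mul_sum, ← Finset.mul_sum,
    Finset.sum_ite_eq' (Finset.range k) 0, Finset.sum_ite_eq' (Finset.range k) 1,
    if_pos (Finset.mem_range.mpr (by omega : 0 < k)),
    if_pos (Finset.mem_range.mpr (by omega : 1 < k)), S1, S2]
  push_cast
  norm_num
  ring_nf

end AuxLemmas

theorem minEig_Ak_upper_bound (k d : ℕ) (hk : 2 ≤ k) (hd : 2 ≤ d)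
    (A : Matrix (Fin k) (Fin k) ℝ)
    (hA : A = Matrix.of fun i j : Fin k =>
      if (i : ℕ) + 1 = j ∨ (j : ℕ) + 1 = i then
        (if (i : ℕ) + (j : ℕ) = 1 then 1 / Real.sqrt d else Real.sqrt (d - 1) / d)
      else 0)
    (hH : A.IsHermitian) :
    haveI : Nonempty (Fin k) := ⟨⟨0, by omega⟩⟩
    (⨅ i, hH.eigenvalues i) ≤
      -(2 * Real.sqrt (d - 1) / d) *
        (Real.cos (π / (k + 1)) +
          (Real.sqrt (d / (d - 1)) - 1) * (2 / (k + 1)) *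
            Real.sin (π / (k + 1)) * Real.sin (2 * π / (k + 1))) := by
  haveI : Nonempty (Fin k) := ⟨⟨0, by omega⟩⟩
  show (⨅ i, hH.eigenvalues i) ≤ _
  have hd' : (2:ℝ) ≤ d := by exact_mod_cast hd
  have hd1 : (0:ℝ) < (d:ℝ) - 1 := by linarith
  have hdpos : (0:ℝ) < d := by linarith
  set b : ℝ := Real.sqrt (d - 1) / d with hb
  set c : ℝ := 1 / Real.sqrt d with hc
  have hcb : b * Real.sqrt ((d:ℝ) / ((d:ℝ) - 1)) = c := by
    have h1 : Real.sqrt ((d:ℝ) - 1) * Real.sqrt ((d:ℝ) / ((d:ℝ) - 1)) = Real.sqrt d := by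
      rw [← Real.sqrt_mul hd1.le]
      congr 1
      field_simp
    have h2 : Real.sqrt (d:ℝ) * Real.sqrt (d:ℝ) = d := Real.mul_self_sqrt hdpos.le
    have hsq : Real.sqrt (d:ℝ) ≠ 0 := by positivity
    rw [hb, hc, div_mul_eq_mul_div, h1, div_eq_div_iff (by positivity) hsq]
    linarith [h2]
  have hray := rayleigh_min A hH (fun j : Fin k => tv (π / (k + 1)) (j : ℕ))
  rw [norm_tv hk, quad_tv hk hd A hA] at hray
  rw [show (2 * π / ((k:ℝ) + 1)) = 2 * (π / ((k:ℝ) + 1)) by ring]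
  have hk1 : ((k:ℝ) + 1) ≠ 0 := by positivity
  have hP : (0:ℝ) < ((k:ℝ) + 1) / 2 := by positivity
  refine le_of_mul_le_mul_right ?_ hP
  have heq : (-(2 * Real.sqrt (d - 1) / d) *
        (Real.cos (π / ((k:ℝ) + 1)) + (Real.sqrt ((d:ℝ) / ((d:ℝ) - 1)) - 1) * (2 / ((k:ℝ) + 1)) *
          Real.sin (π / ((k:ℝ) + 1)) * Real.sin (2 * (π / ((k:ℝ) + 1))))) * (((k:ℝ) + 1) / 2)
      = -(b * (((k:ℝ) + 1) * Real.cos (π / ((k:ℝ) + 1))))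
        - 2 * ((b * Real.sqrt ((d:ℝ) / ((d:ℝ) - 1))) - b) *
            (Real.sin (π / ((k:ℝ) + 1)) * Real.sin (2 * (π / ((k:ℝ) + 1)))) := by
    rw [hb]
    set r := Real.sqrt ((d:ℝ) / ((d:ℝ) - 1)) with hr
    set s := Real.sqrt ((d:ℝ) - 1) with hs
    have hdne : ((d:ℝ)) ≠ 0 := ne_of_gt hdpos
    field_simp
    ring
  rw [heq, hcb]
  exact hray
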